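/- Let X, M, X̂ be random variables with X → M → X̂ a Markov chain such that, conditioned on M, X̂ is independent of X and has the same conditional distribution as X given M. Then E[‖X − X̂‖²] = 2·E[‖X − E[X|M]‖²]; that is, any such distribution-preserving estimator incurs mean squared error exactly twice the minimum mean squared error of estimating X from M. -/

import Mathlib

/-!
Statement 13: if `X → M → X̂` is a Markov chain such that, conditioned on `M`, `X̂` is
independent of `X` and has the same conditional distribution as `X` given `M`, then
`E[‖X - X̂‖²] = 2·E[‖X - E[X|M]‖²]`: a distribution-preserving estimator incurs
mean squared error exactly twice the MMSE of estimating `X` from `M`.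
-/

open MeasureTheory ProbabilityTheory Real
open scoped RealInnerProductSpace

section AuxLemmas

variable {E : Type*} [NormedAddCommGroup E] [InnerProductSpace ℝ E] [CompleteSpace E]
  [MeasurableSpace E] [BorelSpace E] [SecondCountableTopology E]

lemma aux_sq_norm_sub_le (x y : E) : ‖x - y‖ ^ 2 ≤ 2 * ‖x‖ ^ 2 + 2 * ‖y‖ ^ 2 := by
  have h := norm_sub_le x y
  nlinarith [norm_nonneg x, norm_nonneg y, norm_nonneg (x - y), sq_nonneg (‖x‖ - ‖y‖)]

lemma aux_integrable_id {μ : Measure E} [IsProbabilityMeasure μ]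
    (h2 : Integrable (fun x => ‖x‖ ^ 2) μ) : Integrable (fun x : E => x) μ := by
  refine ((integrable_const (1 : ℝ)).add h2).mono' aestronglyMeasurable_id
    (Filter.Eventually.of_forall fun x => ?_)
  have h := sq_nonneg (‖x‖ - 1)
  simp only [id_eq, Pi.add_apply]
  nlinarith [norm_nonneg x]

lemma aux_sq_integral_le {μ : Measure E} [IsProbabilityMeasure μ]
    (h2 : Integrable (fun x => ‖x‖ ^ 2) μ) :
    ‖∫ x, x ∂μ‖ ^ 2 ≤ ∫ x, ‖x‖ ^ 2 ∂μ := by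
  have h1 : Integrable (fun x : E => ‖x‖) μ := (aux_integrable_id h2).norm
  set a := ∫ x, ‖x‖ ∂μ with ha
  have hsq : 0 ≤ ∫ x, (‖x‖ - a) ^ 2 ∂μ := integral_nonneg fun x => sq_nonneg _
  have hexp : ∫ x, (‖x‖ - a) ^ 2 ∂μ = (∫ x, ‖x‖ ^ 2 ∂μ) - a ^ 2 := by
    have hpt : (fun x : E => (‖x‖ - a) ^ 2)
        = fun x => (‖x‖ ^ 2 - 2 * a * ‖x‖) + a ^ 2 := by
      funext x; ring
    have hsub : Integrable (fun x : E => ‖x‖ ^ 2 - 2 * a * ‖x‖) μ := h2.sub (h1.const_mul _)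
    rw [hpt, integral_add hsub (integrable_const _),
      integral_sub h2 (h1.const_mul _), integral_const_mul, integral_const]
    simp only [measure_univ, probReal_univ, ENNReal.toReal_one, one_smul, ← ha]
    ring
  have h1' : ‖∫ x, x ∂μ‖ ≤ a := norm_integral_le_integral_norm _
  have h0 : (0 : ℝ) ≤ a := integral_nonneg fun x => norm_nonneg _
  nlinarith [norm_nonneg (∫ x, x ∂μ)]

lemma aux_double_integral {μ : Measure E} [IsProbabilityMeasure μ]
    (h2 : Integrable (fun x => ‖x‖ ^ 2) μ)
    (hprod : Integrable (fun q : E × E => ‖q.1 - q.2‖ ^ 2) (μ.prod μ)) :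
    ∫ q : E × E, ‖q.1 - q.2‖ ^ 2 ∂(μ.prod μ) = 2 * ∫ x, ‖x - ∫ y, y ∂μ‖ ^ 2 ∂μ := by
  have hid : Integrable (fun x : E => x) μ := aux_integrable_id h2
  set m := ∫ y, y ∂μ with hm
  set C := ∫ y, ‖y‖ ^ 2 ∂μ with hC
  have hintm : Integrable (fun x : E => ⟪x, m⟫) μ := by
    have h := hid.inner_const (𝕜 := ℝ) m
    exact h
  have hmint : ∫ x, ⟪x, m⟫ ∂μ = ‖m‖ ^ 2 := by
    have hcomm : (fun x : E => ⟪x, m⟫) = fun x => ⟪m, x⟫ :=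
      funext fun x => real_inner_comm _ _
    rw [hcomm, integral_inner hid, ← hm, real_inner_self_eq_norm_sq]
  have hxint : ∀ x : E, ∫ y, ‖x - y‖ ^ 2 ∂μ = (‖x‖ ^ 2 - 2 * ⟪x, m⟫) + C := by
    intro x
    have hpt : (fun y : E => ‖x - y‖ ^ 2)
        = fun y => (‖x‖ ^ 2 - 2 * ⟪x, y⟫) + ‖y‖ ^ 2 := by
      funext y; rw [norm_sub_sq_real]
    have hsub : Integrable (fun y : E => ‖x‖ ^ 2 - 2 * ⟪x, y⟫) μ :=
      (integrable_const _).sub ((hid.const_inner x).const_mul 2)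
    rw [hpt, integral_add hsub h2,
      integral_sub (integrable_const _) ((hid.const_inner x).const_mul 2),
      integral_const_mul, integral_inner hid, integral_const]
    simp only [measure_univ, probReal_univ, ENNReal.toReal_one, one_smul, ← hm, ← hC]
  have hrhs : ∫ x, ‖x - m‖ ^ 2 ∂μ = C - ‖m‖ ^ 2 := by
    have hpt : (fun x : E => ‖x - m‖ ^ 2)
        = fun x => (‖x‖ ^ 2 - 2 * ⟪x, m⟫) + ‖m‖ ^ 2 := by
      funext x; rw [norm_sub_sq_real]
    have hsub : Integrable (fun x : E => ‖x‖ ^ 2 - 2 * ⟪x, m⟫) μ := h2.sub (hintm.const_mul 2)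
    rw [hpt, integral_add hsub (integrable_const _),
      integral_sub h2 (hintm.const_mul 2), integral_const_mul, hmint, integral_const]
    simp only [measure_univ, probReal_univ, ENNReal.toReal_one, one_smul, ← hC]
    ring
  have hsub : Integrable (fun x : E => ‖x‖ ^ 2 - 2 * ⟪x, m⟫) μ := h2.sub (hintm.const_mul 2)
  rw [integral_prod _ hprod]
  simp only [hxint]
  rw [integral_add hsub (integrable_const _),
    integral_sub h2 (hintm.const_mul 2), integral_const_mul, hmint, integral_const]
  simp only [measure_univ, probReal_univ, ENNReal.toReal_one, one_smul, ← hC]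
  rw [hrhs]
  ring

end AuxLemmas

theorem mse_eq_two_mmse
    {Ω : Type*} [MeasurableSpace Ω] [StandardBorelSpace Ω] [Nonempty Ω]
    {E : Type*} [NormedAddCommGroup E] [InnerProductSpace ℝ E] [CompleteSpace E]
    [SecondCountableTopology E] [MeasurableSpace E] [BorelSpace E]
    {γ : Type*} [MeasurableSpace γ]
    (P : Measure Ω) [IsProbabilityMeasure P]
    (X Xhat : Ω → E) (M : Ω → γ)
    (hX : Measurable X) (hXhat : Measurable Xhat) (hM : Measurable M)
    -- `X` is square-integrable
    (hX2 : MeasureTheory.MemLp X 2 P)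
    (hXhat2 : MeasureTheory.MemLp Xhat 2 P)
    -- `X` and `X̂` are conditionally independent given `M`
    (hindep : CondIndepFun (MeasurableSpace.comap M inferInstance) hM.comap_le X Xhat P)
    -- `X̂` has the same conditional distribution given `M` as `X`
    (hdist : ∀ᵐ b ∂(P.map M), condDistrib X M P b = condDistrib Xhat M P b) :
    ∫ ω, ‖X ω - Xhat ω‖ ^ 2 ∂P =
      2 * ∫ ω, ‖X ω - (P[X | MeasurableSpace.comap M inferInstance]) ω‖ ^ 2 ∂P := by
  haveI : IsProbabilityMeasure (P.map M) := Measure.isProbabilityMeasure_map hM.aemeasurable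
  have hT : Measurable fun ω => (M ω, (X ω, Xhat ω)) := hM.prodMk (hX.prodMk hXhat)
  haveI : IsProbabilityMeasure (P.map fun ω => (M ω, (X ω, Xhat ω))) :=
    Measure.isProbabilityMeasure_map hT.aemeasurable
  haveI : IsProbabilityMeasure (P.map fun ω => (M ω, X ω)) :=
    Measure.isProbabilityMeasure_map (hM.prodMk hX).aemeasurable
  -- law of (M, X) disintegrates through condDistrib
  have hMX : (P.map M) ⊗ₘ condDistrib X M P = P.map fun ω => (M ω, X ω) := by
    rw [condDistrib, ← Measure.fst_map_prodMk₀ (X := M) hX.aemeasurable]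
    exact Measure.disintegrate _ _
  -- joint law of (M, (X, Xhat)) is the compProd with the product kernel
  have hjoint : (P.map M) ⊗ₘ (condDistrib X M P ×ₖ condDistrib Xhat M P)
      = P.map fun ω => (M ω, (X ω, Xhat ω)) := by
    refine ext_of_generate_finite
      (Set.image2 (· ×ˢ ·) { A : Set γ | MeasurableSet A }
        (Set.image2 (· ×ˢ ·) { s : Set E | MeasurableSet s } { t : Set E | MeasurableSet t }))
      ?_ ?_ ?_ ?_
    · exact (generateFrom_eq_prod MeasurableSpace.generateFrom_measurableSet generateFrom_prod
        isCountablySpanning_measurableSet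
        (isCountablySpanning_measurableSet.prod isCountablySpanning_measurableSet)).symm
    · exact MeasurableSpace.isPiSystem_measurableSet.prod isPiSystem_prod
    · rintro u ⟨A, hA, v, ⟨s, hs, t, ht, rfl⟩, rfl⟩
      simp only [Set.mem_setOf_eq] at hA hs ht
      have hst : MeasurableSet (s ×ˢ t) := hs.prod ht
      rw [Measure.compProd_apply_prod hA hst, Measure.map_apply hT (hA.prod hst)]
      have hpre : (fun ω => (M ω, (X ω, Xhat ω))) ⁻¹' (A ×ˢ s ×ˢ t)
          = M ⁻¹' A ∩ (X ⁻¹' s ∩ Xhat ⁻¹' t) := by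
        rw [Set.mk_preimage_prod, Set.mk_preimage_prod]
      rw [hpre]
      have hker : ∀ b, (condDistrib X M P ×ₖ condDistrib Xhat M P) b (s ×ˢ t)
          = condDistrib X M P b s * condDistrib Xhat M P b t := fun b => by
        rw [Kernel.prod_apply, Measure.prod_prod]
      simp only [hker]
      rw [setLIntegral_map (f := fun b => condDistrib X M P b s * condDistrib Xhat M P b t) hA
        ((Kernel.measurable_coe _ hs).mul (Kernel.measurable_coe _ ht)) hM]
      -- finite
      have hfin1 : ∫⁻ ω in M ⁻¹' A,
          condDistrib X M P (M ω) s * condDistrib Xhat M P (M ω) t ∂P ≠ ⊤ := by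
        refine ne_top_of_le_ne_top (measure_ne_top P (M ⁻¹' A)) ?_
        calc ∫⁻ ω in M ⁻¹' A, condDistrib X M P (M ω) s * condDistrib Xhat M P (M ω) t ∂P
            ≤ ∫⁻ _ in M ⁻¹' A, 1 ∂P :=
              lintegral_mono fun ω => mul_le_one' prob_le_one prob_le_one
          _ = P (M ⁻¹' A) := by simp
      refine (ENNReal.toReal_eq_toReal_iff' hfin1 (measure_ne_top _ _)).mp ?_
      have hmeasfun : Measurable fun ω =>
          condDistrib X M P (M ω) s * condDistrib Xhat M P (M ω) t :=
        ((Kernel.measurable_coe _ hs).comp hM).mul ((Kernel.measurable_coe _ ht).comp hM)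
      rw [← integral_toReal hmeasfun.aemeasurable.restrict
        (Filter.Eventually.of_forall fun ω =>
          lt_of_le_of_lt (mul_le_one' prob_le_one prob_le_one) ENNReal.one_lt_top)]
      have h1 := condDistrib_ae_eq_condExp (μ := P) hM hX hs
      have h2 := condDistrib_ae_eq_condExp (μ := P) hM hXhat ht
      have h3 := (condIndepFun_iff_condExp_inter_preimage_eq_mul hX hXhat).mp hindep s t hs ht
      have hmeasA : MeasurableSet[MeasurableSpace.comap M inferInstance] (M ⁻¹' A) :=
        ⟨A, hA, rfl⟩
      have h4 : ∫ ω in M ⁻¹' A, (P[(X ⁻¹' s ∩ Xhat ⁻¹' t).indicator (fun _ => (1 : ℝ))|MeasurableSpace.comap M inferInstance]) ω ∂P = (P (M ⁻¹' A ∩ (X ⁻¹' s ∩ Xhat ⁻¹' t))).toReal := by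
        rw [setIntegral_condExp hM.comap_le
          ((integrable_const (1 : ℝ)).indicator ((hX hs).inter (hXhat ht))) hmeasA,
          integral_indicator ((hX hs).inter (hXhat ht)), setIntegral_const,
          measureReal_restrict_apply ((hX hs).inter (hXhat ht)), smul_eq_mul, mul_one, measureReal_def,
          Set.inter_comm]
      calc ∫ ω in M ⁻¹' A,
            (condDistrib X M P (M ω) s * condDistrib Xhat M P (M ω) t).toReal ∂P
          = ∫ ω in M ⁻¹' A,
            (condDistrib X M P (M ω) s).toReal * (condDistrib Xhat M P (M ω) t).toReal ∂P := by
            simp only [ENNReal.toReal_mul]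
        _ = ∫ ω in M ⁻¹' A, (P[(X ⁻¹' s ∩ Xhat ⁻¹' t).indicator (fun _ => (1 : ℝ))|MeasurableSpace.comap M inferInstance]) ω ∂P := by
            refine integral_congr_ae (ae_restrict_of_ae ?_)
            filter_upwards [h1, h2, h3] with ω e1 e2 e3
            rw [← measureReal_def, ← measureReal_def, e1, e2, e3]
        _ = (P (M ⁻¹' A ∩ (X ⁻¹' s ∩ Xhat ⁻¹' t))).toReal := h4
    · rw [Measure.compProd_apply_univ]; simp [measure_univ]
  -- integrability facts
  have hX2' : Integrable (fun ω => ‖X ω‖ ^ 2) P :=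
    (memLp_two_iff_integrable_sq_norm hX2.aestronglyMeasurable).mp hX2
  have hfmap : Integrable (fun p : γ × E => ‖p.2‖ ^ 2) (P.map fun ω => (M ω, X ω)) := by
    rw [integrable_map_measure (measurable_snd.norm.pow_const 2).aestronglyMeasurable
      (hM.prodMk hX).aemeasurable]
    exact hX2'
  have hB : ∀ᵐ b ∂(P.map M), Integrable (fun x : E => ‖x‖ ^ 2) (condDistrib X M P b) := by
    have h := hfmap.condDistrib_ae_map (μ := P) (X := M) (Y := X) hX.aemeasurable
    simpa using h
  have hC : Integrable (fun b => ∫ x, ‖x‖ ^ 2 ∂condDistrib X M P b) (P.map M) := by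
    have h := hfmap.integral_condDistrib_map (μ := P) (X := M) (Y := X) hX.aemeasurable
    simpa using h
  -- the conditional mean
  set G : γ → E := fun b => ∫ x, x ∂condDistrib X M P b with hG
  have hGsm : StronglyMeasurable G := by
    refine StronglyMeasurable.integral_kernel_prod_right (f := fun (_ : γ) (x : E) => x) ?_
    exact measurable_snd.stronglyMeasurable
  have hY : P[X | MeasurableSpace.comap M inferInstance] =ᵐ[P] fun ω => G (M ω) :=
    condExp_ae_eq_integral_condDistrib' hM (hX2.integrable one_le_two)
  -- strong measurability of the integrands
  have hsm2 : StronglyMeasurable fun p : γ × E => ‖p.2 - G p.1‖ ^ 2 :=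
    (((measurable_snd.sub (hGsm.measurable.comp measurable_fst)).norm.pow_const
      2)).stronglyMeasurable
  have hsm1 : StronglyMeasurable fun p : γ × (E × E) => ‖p.2.1 - p.2.2‖ ^ 2 :=
    ((measurable_snd.fst.sub measurable_snd.snd).norm.pow_const 2).stronglyMeasurable
  -- integrability for the RHS compProd
  have hintae : ∀ᵐ b ∂(P.map M),
      Integrable (fun x => ‖x - G b‖ ^ 2) (condDistrib X M P b) := by
    filter_upwards [hB] with b hb
    refine ((hb.const_mul 2).add (integrable_const (2 * ‖G b‖ ^ 2))).mono'
      ((measurable_id.sub_const _).norm.pow_const 2).aestronglyMeasurable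
      (Filter.Eventually.of_forall fun x => ?_)
    rw [Real.norm_of_nonneg (by positivity)]
    exact aux_sq_norm_sub_le x (G b)
  have hout : Integrable
      (fun b => ∫ x, ‖‖x - G b‖ ^ 2‖ ∂condDistrib X M P b) (P.map M) := by
    have heq : (fun b => ∫ x, ‖‖x - G b‖ ^ 2‖ ∂condDistrib X M P b)
        = fun b => ∫ x, ‖x - G b‖ ^ 2 ∂condDistrib X M P b := by
      funext b
      congr 1
      funext x
      rw [Real.norm_of_nonneg (by positivity)]
    rw [heq]
    refine (hC.const_mul 4).mono' ?_ ?_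
    · have hsm2' : StronglyMeasurable (Function.uncurry fun (b : γ) (x : E) => ‖x - G b‖ ^ 2) :=
        hsm2
      exact hsm2'.integral_kernel_prod_right.aestronglyMeasurable
    · filter_upwards [hB, hintae] with b hb hbint
      have h0 : 0 ≤ ∫ x, ‖x‖ ^ 2 ∂condDistrib X M P b :=
        integral_nonneg fun x => by positivity
      rw [Real.norm_of_nonneg (integral_nonneg fun x => by positivity)]
      have hbound : ∫ x, ‖x - G b‖ ^ 2 ∂condDistrib X M P b
          ≤ ∫ x, (2 * ‖x‖ ^ 2 + 2 * ‖G b‖ ^ 2) ∂condDistrib X M P b :=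
        integral_mono hbint ((hb.const_mul 2).add (integrable_const _))
          (fun x => aux_sq_norm_sub_le x (G b))
      have heval : ∫ x, (2 * ‖x‖ ^ 2 + 2 * ‖G b‖ ^ 2) ∂condDistrib X M P b
          = 2 * (∫ x, ‖x‖ ^ 2 ∂condDistrib X M P b) + 2 * ‖G b‖ ^ 2 := by
        rw [integral_add (hb.const_mul 2) (integrable_const _), integral_const_mul,
          integral_const]
        simp [measure_univ]
      have hJ : ‖G b‖ ^ 2 ≤ ∫ x, ‖x‖ ^ 2 ∂condDistrib X M P b := aux_sq_integral_le hb
      linarith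
  have hC2 : Integrable (fun p : γ × E => ‖p.2 - G p.1‖ ^ 2)
      ((P.map M) ⊗ₘ condDistrib X M P) := by
    rw [Measure.integrable_compProd_iff hsm2.aestronglyMeasurable]
    exact ⟨hintae, hout⟩
  -- integrability for the LHS compProd
  have hsub2 : Integrable (fun ω => ‖X ω - Xhat ω‖ ^ 2) P :=
    (memLp_two_iff_integrable_sq_norm (hX2.sub hXhat2).aestronglyMeasurable).mp
      (hX2.sub hXhat2)
  have hC1 : Integrable (fun p : γ × (E × E) => ‖p.2.1 - p.2.2‖ ^ 2)
      ((P.map M) ⊗ₘ (condDistrib X M P ×ₖ condDistrib Xhat M P)) := by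
    rw [hjoint, integrable_map_measure hsm1.aestronglyMeasurable hT.aemeasurable]
    exact hsub2
  have hinner1 : ∀ᵐ b ∂(P.map M), Integrable (fun q : E × E => ‖q.1 - q.2‖ ^ 2)
      ((condDistrib X M P ×ₖ condDistrib Xhat M P) b) :=
    ((Measure.integrable_compProd_iff hsm1.aestronglyMeasurable).mp hC1).1
  have hLHS : ∫ ω, ‖X ω - Xhat ω‖ ^ 2 ∂P
      = ∫ b, ∫ q : E × E, ‖q.1 - q.2‖ ^ 2
          ∂((condDistrib X M P ×ₖ condDistrib Xhat M P) b) ∂(P.map M) := by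
    calc ∫ ω, ‖X ω - Xhat ω‖ ^ 2 ∂P
        = ∫ p : γ × (E × E), ‖p.2.1 - p.2.2‖ ^ 2 ∂(P.map fun ω => (M ω, (X ω, Xhat ω))) :=
          (integral_map hT.aemeasurable hsm1.aestronglyMeasurable).symm
      _ = ∫ p : γ × (E × E), ‖p.2.1 - p.2.2‖ ^ 2
            ∂((P.map M) ⊗ₘ (condDistrib X M P ×ₖ condDistrib Xhat M P)) := by rw [hjoint]
      _ = _ := Measure.integral_compProd hC1
  have hRHS : ∫ ω, ‖X ω - G (M ω)‖ ^ 2 ∂P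
      = ∫ b, ∫ x, ‖x - G b‖ ^ 2 ∂condDistrib X M P b ∂(P.map M) := by
    calc ∫ ω, ‖X ω - G (M ω)‖ ^ 2 ∂P
        = ∫ p : γ × E, ‖p.2 - G p.1‖ ^ 2 ∂(P.map fun ω => (M ω, X ω)) :=
          (integral_map (hM.prodMk hX).aemeasurable hsm2.aestronglyMeasurable).symm
      _ = ∫ p : γ × E, ‖p.2 - G p.1‖ ^ 2 ∂((P.map M) ⊗ₘ condDistrib X M P) := by rw [hMX]
      _ = _ := Measure.integral_compProd hC2
  have hstep : ∀ᵐ b ∂(P.map M),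
      ∫ q : E × E, ‖q.1 - q.2‖ ^ 2 ∂((condDistrib X M P ×ₖ condDistrib Xhat M P) b)
        = 2 * ∫ x, ‖x - G b‖ ^ 2 ∂condDistrib X M P b := by
    filter_upwards [hdist, hB, hinner1] with b hbd hb2 hbint
    rw [Kernel.prod_apply, ← hbd] at hbint ⊢
    exact aux_double_integral hb2 hbint
  have hcong : ∫ ω, ‖X ω - (P[X | MeasurableSpace.comap M inferInstance]) ω‖ ^ 2 ∂P
      = ∫ ω, ‖X ω - G (M ω)‖ ^ 2 ∂P := by
    refine integral_congr_ae ?_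
    filter_upwards [hY] with ω h
    rw [h]
  rw [hcong, hRHS, hLHS, integral_congr_ae hstep, integral_const_mul]
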